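/- Fix an integer N ≥ 1, γ ∈ SL₂(ℤ), and points z₁, z₂ in the upper half-plane ℍ. Then there exists a matrix x = !![a,b;c,d] ∈ M₂(ℚ) with x − (1/N)γ ∈ M₂(ℤ), det x = 1/N², and c·z₁z₂ + d·z₁ − a·z₂ − b = 0, if and only if there exists γ₁ ∈ Γ(N) with z₁ = (γ₁γ)·z₂ under the Möbius action of SL₂(ℤ) on ℍ. -/

import Mathlib

open scoped MatrixGroups
open Matrix UpperHalfPlane

lemma moeb_iff (A : Matrix.SpecialLinearGroup (Fin 2) ℤ) (z₁ z₂ : UpperHalfPlane) :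
    z₁ = A • z₂ ↔ ((A 1 0 : ℤ) : ℂ) * z₁ * z₂ + ((A 1 1 : ℤ) : ℂ) * z₁
      - ((A 0 0 : ℤ) : ℂ) * z₂ - ((A 0 1 : ℤ) : ℂ) = 0 := by
  have hd : ((A 1 0 : ℤ) : ℂ) * (z₂ : ℂ) + ((A 1 1 : ℤ) : ℂ) ≠ 0 := by
    have h : denom A z₂ ≠ 0 := denom_ne_zero _ z₂
    rwa [ModularGroup.denom_apply] at h
  rw [UpperHalfPlane.ext_iff, UpperHalfPlane.specialLinearGroup_apply]
  simp only [UpperHalfPlane.coe_mk, algebraMap_int_eq, eq_intCast, Complex.ofReal_intCast]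
  rw [eq_div_iff hd]
  constructor <;> intro h <;> linear_combination h

/-- **Paper, Lemma 3.2.** Fix `N ≥ 1`, `γ ∈ SL₂(ℤ)` and `z₁, z₂ ∈ ℍ`. There is a
rational matrix `x = !![a,b;c,d]` with `x - (1/N)γ ∈ M₂(ℤ)`, `det x = 1/N²` and
`c z₁ z₂ + d z₁ - a z₂ - b = 0` (i.e. `x ⟂ w_N(z₁,z₂)` and `Q(x) = 1/N`) iff
`z₁ = (γ₁ γ) z₂` for some `γ₁ ∈ Γ(N)`. -/
theorem stmt9 (N : ℕ) (hN : 1 ≤ N) (γ : Matrix.SpecialLinearGroup (Fin 2) ℤ)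
    (z₁ z₂ : UpperHalfPlane) :
    (∃ x : Matrix (Fin 2) (Fin 2) ℚ,
      (∃ m : Matrix (Fin 2) (Fin 2) ℤ,
        x - (N : ℚ)⁻¹ • ((γ : Matrix (Fin 2) (Fin 2) ℤ).map (Int.cast : ℤ → ℚ))
          = m.map (Int.cast : ℤ → ℚ)) ∧
      x.det = ((N : ℚ) ^ 2)⁻¹ ∧
      ((x 1 0 : ℚ) : ℂ) * (z₁ : ℂ) * (z₂ : ℂ) + ((x 1 1 : ℚ) : ℂ) * (z₁ : ℂ)
        - ((x 0 0 : ℚ) : ℂ) * (z₂ : ℂ) - ((x 0 1 : ℚ) : ℂ) = 0)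
    ↔ ∃ γ₁ ∈ CongruenceSubgroup.Gamma N, z₁ = (γ₁ * γ) • z₂ := by
  have hN0 : (N : ℚ) ≠ 0 := by positivity
  have hNc : (N : ℂ) ≠ 0 := Nat.cast_ne_zero.mpr (by omega)
  have hNz : (N : ℤ) ≠ 0 := Int.natCast_ne_zero.mpr (by omega)
  constructor
  · rintro ⟨x, ⟨m, hm⟩, hdet, heq⟩
    set B : Matrix (Fin 2) (Fin 2) ℤ := (γ : Matrix (Fin 2) (Fin 2) ℤ) + (N : ℤ) • m with hB
    have hxB : ∀ i j, x i j = (N : ℚ)⁻¹ * (B i j : ℚ) := by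
      intro i j
      have := congrFun (congrFun hm i) j
      simp only [Matrix.sub_apply, Matrix.smul_apply, Matrix.map_apply, smul_eq_mul] at this
      simp only [hB, Matrix.add_apply, Matrix.smul_apply, smul_eq_mul]
      push_cast
      field_simp at this ⊢
      linarith
    have hBdet : B.det = 1 := by
      have h2 : B.map (Int.cast : ℤ → ℚ) = (N : ℚ) • x := by
        ext i j
        simp only [Matrix.map_apply, Matrix.smul_apply, hxB i j, smul_eq_mul]
        field_simp
      have h3 := RingHom.map_det (Int.castRingHom ℚ) B
      simp only [RingHom.mapMatrix_apply, Int.coe_castRingHom] at h3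
      rw [h2, Matrix.det_smul] at h3
      simp only [Int.coe_castRingHom, Fintype.card_fin, hdet] at h3
      have h4 : ((B.det : ℤ) : ℚ) = 1 := by rw [h3]; field_simp
      exact_mod_cast h4
    let A : SL(2, ℤ) := ⟨B, hBdet⟩
    refine ⟨A * γ⁻¹, ?_, ?_⟩
    · rw [CongruenceSubgroup.Gamma_mem']
      have hAg : (Matrix.SpecialLinearGroup.map (Int.castRingHom (ZMod N))) A
          = (Matrix.SpecialLinearGroup.map (Int.castRingHom (ZMod N))) γ := by
        ext i j
        show ((B i j : ℤ) : ZMod N) = ((γ i j : ℤ) : ZMod N)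
        rw [hB]
        simp only [Matrix.add_apply, Matrix.smul_apply, smul_eq_mul]
        push_cast [ZMod.natCast_self]
        ring
      rw [_root_.map_mul, _root_.map_inv, hAg]
      group
    · rw [inv_mul_cancel_right]
      rw [moeb_iff]
      have key : ∀ i j, ((A i j : ℤ) : ℂ) = (N : ℂ) * ((x i j : ℚ) : ℂ) := by
        intro i j
        show ((B i j : ℤ) : ℂ) = _
        rw [hxB i j]
        push_cast
        rw [mul_inv_cancel_left₀ hNc]
      rw [key 1 0, key 1 1, key 0 0, key 0 1]
      linear_combination (N : ℂ) * heq
  · rintro ⟨γ₁, hγ₁, hz⟩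
    set A : SL(2, ℤ) := γ₁ * γ with hA
    have hdvd : ∀ i j, (N : ℤ) ∣ (A i j - γ i j) := by
      intro i j
      have hred : (Matrix.SpecialLinearGroup.map (Int.castRingHom (ZMod N))) A
          = (Matrix.SpecialLinearGroup.map (Int.castRingHom (ZMod N))) γ := by
        rw [hA, _root_.map_mul, CongruenceSubgroup.Gamma_mem'.mp hγ₁, one_mul]
      have h5 : ((A i j : ℤ) : ZMod N) = ((γ i j : ℤ) : ZMod N) :=
        (Matrix.SpecialLinearGroup.ext_iff _ _).mp hred i j
      have h6 : ((A i j - γ i j : ℤ) : ZMod N) = 0 := by push_cast; rw [h5]; ring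
      exact_mod_cast (ZMod.intCast_zmod_eq_zero_iff_dvd _ _).mp h6
    refine ⟨(N : ℚ)⁻¹ • ((A : Matrix (Fin 2) (Fin 2) ℤ).map (Int.cast : ℤ → ℚ)), ⟨?_, ?_, ?_⟩⟩
    · refine ⟨Matrix.of fun i j => (A i j - γ i j) / (N : ℤ), ?_⟩
      ext i j
      obtain ⟨k, hk⟩ := hdvd i j
      have hdiv : ((A i j : ℤ) - γ i j) / (N : ℤ) = k := by
        rw [hk]; exact Int.mul_ediv_cancel_left _ hNz
      have hkQ : ((A i j : ℤ) : ℚ) - ((γ i j : ℤ) : ℚ) = (N : ℚ) * (k : ℚ) := by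
        exact_mod_cast congrArg (Int.cast : ℤ → ℚ) hk
      simp only [Matrix.sub_apply, Matrix.smul_apply, Matrix.map_apply, Matrix.of_apply,
        smul_eq_mul, hdiv]
      field_simp
      linarith
    · have hAd : ((A : Matrix (Fin 2) (Fin 2) ℤ).map (Int.cast : ℤ → ℚ)).det = 1 := by
        have h := RingHom.map_det (Int.castRingHom ℚ) (A : Matrix (Fin 2) (Fin 2) ℤ)
        rw [Matrix.SpecialLinearGroup.det_coe] at h
        simpa using h.symm
      rw [Matrix.det_smul, hAd]
      simp only [Fintype.card_fin, mul_one, inv_pow]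
    · rw [moeb_iff] at hz
      simp only [Matrix.smul_apply, Matrix.map_apply, smul_eq_mul]
      push_cast
      field_simp
      linear_combination hz
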